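/- Let T be the DL-Lite_core TBox {Vertex ⊑ ∃hasColour, ∃hasColour⁻ ⊑ ACol} and q the Boolean CQ q() = ∃x,y,z,w. Edge(x,y) ∧ hasColour(x,z) ∧ hasColour(y,z) ∧ ACol(w). For any finite undirected connected graph G = (V,E) without self-loops, with the vertices of V, a fresh vertex a, and fresh colours r,g,b all pairwise distinct individuals, let A_G be the bag ABox containing: Vertex(u) with multiplicity 1 for each u ∈ V; Edge(u,v) and Edge(v,u) with multiplicity 1 for each {u,v} ∈ E; ACol(r) with multiplicity |V|+1; ACol(g) and ACol(b) each with multiplicity |V|; and Vertex(a), Edge(a,a), hasColour(a,r) each with multiplicity 1. Then G is not 3-colourable if and only if the bag certain answer q^{⟨T,A_G⟩}(⟨⟩) is at least 3·|V| + 2. -/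

import Mathlib

/-!
Common formalization of the bag semantics of DL-Lite ontologies
(Nikolaou et al., "The Bag Semantics of Ontology-Based Data Access").
-/

open scoped Classical

noncomputable section

/-- Individuals (constants). -/
abbrev Ind : Type := ℕ
/-- Variables. -/
abbrev Var : Type := ℕ
/-- Atomic concepts (unary predicates). -/
abbrev AtomicConcept : Type := ℕ
/-- Atomic roles (binary predicates). -/
abbrev AtomicRole : Type := ℕ

/-- A role is an atomic role or its inverse. -/
inductive Role where
  | atomic : AtomicRole → Role
  | inv : AtomicRole → Role
  deriving DecidableEq

/-- A concept is an atomic concept or `∃R` for a role `R`. -/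
inductive DLConcept where
  | atomic : AtomicConcept → DLConcept
  | ex : Role → DLConcept
  deriving DecidableEq

/-- TBox axioms: inclusions and disjointness axioms between concepts or roles. -/
inductive TBoxAxiom where
  | cIncl : DLConcept → DLConcept → TBoxAxiom
  | rIncl : Role → Role → TBoxAxiom
  | cDisj : DLConcept → DLConcept → TBoxAxiom
  | rDisj : Role → Role → TBoxAxiom
  deriving DecidableEq

/-- A DL-Lite_R TBox: a finite set of TBox axioms. -/
abbrev TBox : Type := Finset TBoxAxiom

/-- A DL-Lite_core TBox: only concept inclusions and concept disjointness axioms. -/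
def TBox.IsCore (T : TBox) : Prop :=
  ∀ ax ∈ T, (∃ C D, ax = TBoxAxiom.cIncl C D) ∨ (∃ C D, ax = TBoxAxiom.cDisj C D)

/-- ABox assertions. -/
inductive Assertion where
  | conceptA : AtomicConcept → Ind → Assertion
  | roleA : AtomicRole → Ind → Ind → Assertion
  deriving DecidableEq

/-- A bag ABox: a finite bag of assertions (represented as a multiset). -/
abbrev BagABox : Type := Multiset Assertion

/-- Multiplicity of an assertion in a bag ABox, as an extended natural. -/
def BagABox.mult (A : BagABox) (s : Assertion) : ℕ∞ := (A.count s : ℕ∞)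

/-- Sum of an arbitrary family of extended naturals. -/
def bagSum {α : Type*} (f : α → ℕ∞) : ℕ∞ := ⨆ s : Finset α, ∑ x ∈ s, f x

/-- A bag interpretation. -/
structure BagInterp : Type 1 where
  Δ : Type
  dne : Nonempty Δ
  indMap : Ind → Δ
  indInj : Function.Injective indMap
  cI : AtomicConcept → Δ → ℕ∞
  rI : AtomicRole → Δ → Δ → ℕ∞

/-- Extension of the interpretation function to roles. -/
def BagInterp.roleMult (I : BagInterp) : Role → I.Δ → I.Δ → ℕ∞
  | Role.atomic P => fun u v => I.rI P u v
  | Role.inv P => fun u v => I.rI P v u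

/-- Extension of the interpretation function to concepts. -/
def BagInterp.conceptMult (I : BagInterp) : DLConcept → I.Δ → ℕ∞
  | DLConcept.atomic A => fun u => I.cI A u
  | DLConcept.ex R => fun u => bagSum (fun v => I.roleMult R u v)

/-- Multiplicity of an assertion in a bag interpretation. -/
def BagInterp.assertMult (I : BagInterp) : Assertion → ℕ∞
  | Assertion.conceptA A a => I.cI A (I.indMap a)
  | Assertion.roleA P a b => I.rI P (I.indMap a) (I.indMap b)

/-- Satisfaction of a TBox axiom by a bag interpretation. -/
def BagInterp.SatisfiesAx (I : BagInterp) : TBoxAxiom → Prop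
  | TBoxAxiom.cIncl C D => ∀ u, I.conceptMult C u ≤ I.conceptMult D u
  | TBoxAxiom.rIncl R S => ∀ u v, I.roleMult R u v ≤ I.roleMult S u v
  | TBoxAxiom.cDisj C D => ∀ u, min (I.conceptMult C u) (I.conceptMult D u) = 0
  | TBoxAxiom.rDisj R S => ∀ u v, min (I.roleMult R u v) (I.roleMult S u v) = 0

/-- A DL-Lite^bag ontology. -/
structure Ontology : Type where
  tbox : TBox
  abox : BagABox

/-- `I` is a bag model of the ontology `K`. -/
def BagInterp.IsModel (I : BagInterp) (K : Ontology) : Prop :=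
  (∀ ax ∈ K.tbox, I.SatisfiesAx ax) ∧
  ∀ s : Assertion, BagABox.mult K.abox s ≤ I.assertMult s

/-- Satisfiability of an ontology under bag semantics. -/
def Ontology.Satisfiable (K : Ontology) : Prop := ∃ I : BagInterp, I.IsModel K

/- ## Conjunctive queries -/

/-- Terms: variables or individuals. -/
inductive Term where
  | var : Var → Term
  | ind : Ind → Term
  deriving DecidableEq

def Term.varsOf : Term → List Var
  | Term.var v => [v]
  | Term.ind _ => []

def Term.indsOf : Term → List Ind
  | Term.var _ => []
  | Term.ind a => [a]

/-- Query atoms: concept atoms, role atoms, and equalities. -/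
inductive QAtom where
  | conceptAt : AtomicConcept → Term → QAtom
  | roleAt : AtomicRole → Term → Term → QAtom
  | eqAt : Var → Term → QAtom
  deriving DecidableEq

def QAtom.terms : QAtom → List Term
  | QAtom.conceptAt _ t => [t]
  | QAtom.roleAt _ t₁ t₂ => [t₁, t₂]
  | QAtom.eqAt z t => [Term.var z, t]

def QAtom.vars : QAtom → List Var
  | QAtom.conceptAt _ t => t.varsOf
  | QAtom.roleAt _ t₁ t₂ => t₁.varsOf ++ t₂.varsOf
  | QAtom.eqAt z t => z :: t.varsOf

/-- A conjunctive query `q(x) = ∃y. φ(x,y)`: a tuple of answer variables,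
a tuple of existential variables, and a conjunction (list, i.e. allowing
repetitions) of atoms. -/
structure CQ : Type where
  answerVars : List Var
  existVars : List Var
  atoms : List QAtom

def CQ.vars (q : CQ) : List Var := q.answerVars ++ q.existVars

/-- Value of a term under a valuation of the variables. -/
def termVal (I : BagInterp) (f : Var → I.Δ) : Term → I.Δ
  | Term.var v => f v
  | Term.ind a => I.indMap a

/-- Multiplicity contributed by an atom under a valuation: for predicate atoms the
multiplicity of the image tuple, for equalities the indicator of satisfaction. -/
def QAtom.mult (I : BagInterp) (f : Var → I.Δ) : QAtom → ℕ∞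
  | QAtom.conceptAt A t => I.cI A (termVal I f t)
  | QAtom.roleAt P t₁ t₂ => I.rI P (termVal I f t₁) (termVal I f t₂)
  | QAtom.eqAt z t => if f z = termVal I f t then 1 else 0

/-- The bag answers `q^I(ā)`: the sum, over all valuations of the variables of `q`
mapping the answer variables to `ā` (valuations are normalized to a fixed junk
value outside the variables of `q`), of the product of the multiplicities of the
atom occurrences of `q`. -/
def CQ.bagAnswer (q : CQ) (I : BagInterp) (a : List Ind) : ℕ∞ :=
  bagSum (fun f : {f : Var → I.Δ //
      (∀ v, v ∉ q.vars → f v = I.indMap 0) ∧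
      q.answerVars.map f = a.map I.indMap} =>
    (q.atoms.map (QAtom.mult I f.1)).prod)

/-- Bag certain answers: pointwise minimum over all bag models. -/
def bagCertain (K : Ontology) (q : CQ) (a : List Ind) : ℕ∞ :=
  ⨅ (I : BagInterp) (_ : I.IsModel K), q.bagAnswer I a

/-- Base relation of the equivalence relation generated by the equality atoms. -/
def CQ.eqBase (q : CQ) : Term → Term → Prop := fun t₁ t₂ =>
  ∃ z t, QAtom.eqAt z t ∈ q.atoms ∧ t₁ = Term.var z ∧ t₂ = t

/-- Equivalence of terms generated by the equality atoms of `q`. -/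
def CQ.eqRel (q : CQ) : Term → Term → Prop := Relation.EqvGen q.eqBase

/-- Safety: the class of every variable contains a term occurring in a
non-equality atom. -/
def CQ.Safe (q : CQ) : Prop :=
  ∀ v ∈ q.vars, ∃ t : Term, ∃ atm ∈ q.atoms,
    (∀ z s, atm ≠ QAtom.eqAt z s) ∧ t ∈ QAtom.terms atm ∧ q.eqRel (Term.var v) t

/-- Well-formedness of CQs: repetition-free disjoint tuples of variables, all
variables of the atoms among the declared variables, and safety. -/
def CQ.WellFormed (q : CQ) : Prop :=
  q.answerVars.Nodup ∧ q.existVars.Nodup ∧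
  (∀ v ∈ q.answerVars, v ∉ q.existVars) ∧
  (∀ atm ∈ q.atoms, ∀ v ∈ QAtom.vars atm, v ∈ q.vars) ∧
  q.Safe

def CQ.mentionsTerm (q : CQ) (t : Term) : Prop := ∃ atm ∈ q.atoms, t ∈ QAtom.terms atm

/-- Adjacency in the Gaifman graph of `q` (on terms; equality atoms merge the
classes of their two terms, which for connectivity purposes is the same as
making them adjacent). -/
def CQ.gaifmanAdj (q : CQ) : Term → Term → Prop := fun t₁ t₂ =>
  ∃ atm ∈ q.atoms, t₁ ∈ QAtom.terms atm ∧ t₂ ∈ QAtom.terms atm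

/-- A CQ is rooted if every connected component of its Gaifman graph contains
an answer variable or an individual. -/
def CQ.Rooted (q : CQ) : Prop :=
  ∀ t : Term, q.mentionsTerm t →
    ∃ t' : Term, Relation.ReflTransGen q.gaifmanAdj t t' ∧
      ((∃ v ∈ q.answerVars, t' = Term.var v) ∨ ∃ a : Ind, t' = Term.ind a)

/- ## Set semantics -/

/-- A classical (set) interpretation. -/
structure SetInterp : Type 1 where
  Δ : Type
  dne : Nonempty Δ
  indMap : Ind → Δ
  indInj : Function.Injective indMap
  cI : AtomicConcept → Set Δ
  rI : AtomicRole → Set (Δ × Δ)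

def SetInterp.roleSet (I : SetInterp) : Role → Set (I.Δ × I.Δ)
  | Role.atomic P => I.rI P
  | Role.inv P => {p | (p.2, p.1) ∈ I.rI P}

def SetInterp.conceptSet (I : SetInterp) : DLConcept → Set I.Δ
  | DLConcept.atomic A => I.cI A
  | DLConcept.ex R => {u | ∃ v, (u, v) ∈ I.roleSet R}

def SetInterp.SatisfiesAx (I : SetInterp) : TBoxAxiom → Prop
  | TBoxAxiom.cIncl C D => I.conceptSet C ⊆ I.conceptSet D
  | TBoxAxiom.rIncl R S => I.roleSet R ⊆ I.roleSet S
  | TBoxAxiom.cDisj C D => I.conceptSet C ∩ I.conceptSet D = ∅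
  | TBoxAxiom.rDisj R S => I.roleSet R ∩ I.roleSet S = ∅

def SetInterp.SatisfiesAssertion (I : SetInterp) : Assertion → Prop
  | Assertion.conceptA A a => I.indMap a ∈ I.cI A
  | Assertion.roleA P a b => (I.indMap a, I.indMap b) ∈ I.rI P

/-- `I` is a (set) model of the TBox `T` and the set ABox `A`. -/
def SetInterp.IsModelOf (I : SetInterp) (T : TBox) (A : Finset Assertion) : Prop :=
  (∀ ax ∈ T, I.SatisfiesAx ax) ∧ ∀ s ∈ A, I.SatisfiesAssertion s

def setTermVal (I : SetInterp) (f : Var → I.Δ) : Term → I.Δ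
  | Term.var v => f v
  | Term.ind a => I.indMap a

def SetInterp.SatAtom (I : SetInterp) (f : Var → I.Δ) : QAtom → Prop
  | QAtom.conceptAt A t => setTermVal I f t ∈ I.cI A
  | QAtom.roleAt P t₁ t₂ => (setTermVal I f t₁, setTermVal I f t₂) ∈ I.rI P
  | QAtom.eqAt z t => f z = setTermVal I f t

/-- `q(ā)` holds in the set interpretation `I`. -/
def SetInterp.SatCQ (I : SetInterp) (q : CQ) (a : List Ind) : Prop :=
  ∃ f : Var → I.Δ, q.answerVars.map f = a.map I.indMap ∧ ∀ atm ∈ q.atoms, I.SatAtom f atm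

/-- Entailment of a concept inclusion from a TBox (standard set semantics). -/
def TBox.EntailsCI (T : TBox) (C D : DLConcept) : Prop :=
  ∀ I : SetInterp, (∀ ax ∈ T, I.SatisfiesAx ax) → I.conceptSet C ⊆ I.conceptSet D

/- ## The canonical bag model -/

/-- Domain elements of the canonical model: individuals and anonymous elements
`w^j_{u,R}`. -/
inductive CanElem where
  | ind : Ind → CanElem
  | anon : CanElem → Role → ℕ → CanElem
  deriving DecidableEq

def CanElem.isAnon : CanElem → Prop
  | CanElem.ind _ => False
  | CanElem.anon _ _ _ => True

/-- A stage of the canonical-model construction: a set of active elements and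
bag interpretations of the predicates. -/
structure PreInterp : Type where
  active : Set CanElem
  c : AtomicConcept → CanElem → ℕ∞
  r : AtomicRole → CanElem → CanElem → ℕ∞

def PreInterp.toInterp (P : PreInterp) : BagInterp where
  Δ := CanElem
  dne := ⟨CanElem.ind 0⟩
  indMap := CanElem.ind
  indInj := fun a b h => by cases h; rfl
  cI := P.c
  rI := P.r

/-- Concept closure: `ccl(u,I,T)(C)` is the supremum of `C₀^I(u)` over all
concepts `C₀` with `T ⊨ C₀ ⊑ C`. -/
def cclI (T : TBox) (I : BagInterp) (C : DLConcept) (u : I.Δ) : ℕ∞ :=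
  ⨆ C₀ : {C₀ : DLConcept // TBox.EntailsCI T C₀ C}, I.conceptMult C₀.1 u

def PreInterp.ccl (P : PreInterp) (T : TBox) (u : CanElem) (C : DLConcept) : ℕ∞ :=
  cclI T P.toInterp C u

/-- `δ = ccl(u,C_{i-1},T)(∃R) − (∃R)^{C_{i-1}}(u)` (truncated subtraction). -/
def PreInterp.delta (P : PreInterp) (T : TBox) (u : CanElem) (R : Role) : ℕ∞ :=
  P.ccl T u (DLConcept.ex R) - P.toInterp.conceptMult (DLConcept.ex R) u

/-- The anonymous elements freshly added when stepping from `P`. -/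
def PreInterp.NewAnon (P : PreInterp) (T : TBox) (w : CanElem) : Prop :=
  ∃ u R j, w = CanElem.anon u R j ∧ u ∈ P.active ∧ (j : ℕ∞) < P.delta T u R

/-- One step of the canonical-model construction. -/
def PreInterp.step (P : PreInterp) (T : TBox) : PreInterp where
  active := P.active ∪ {w | P.NewAnon T w}
  c := fun A u => if u ∈ P.active then P.ccl T u (DLConcept.atomic A) else 0
  r := fun P₀ u v =>
    if u ∈ P.active ∧ v ∈ P.active then P.r P₀ u v
    else if ∃ j, v = CanElem.anon u (Role.atomic P₀) j ∧ P.NewAnon T v then 1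
    else if ∃ j, u = CanElem.anon v (Role.inv P₀) j ∧ P.NewAnon T u then 1
    else 0

/-- The stages `C_i(K)` of the canonical bag model. -/
def canStage (K : Ontology) : ℕ → PreInterp
  | 0 =>
    { active := Set.range CanElem.ind
      c := fun A u =>
        match u with
        | CanElem.ind a => BagABox.mult K.abox (Assertion.conceptA A a)
        | _ => 0
      r := fun P u v =>
        match u, v with
        | CanElem.ind a, CanElem.ind b => BagABox.mult K.abox (Assertion.roleA P a b)
        | _, _ => 0 }
  | (i + 1) => (canStage K i).step K.tbox

/-- The canonical bag model `C(K) = ⋃_{i ≥ 0} C_i(K)` (pointwise maximum). -/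
def canInterp (K : Ontology) : BagInterp where
  Δ := CanElem
  dne := ⟨CanElem.ind 0⟩
  indMap := CanElem.ind
  indInj := fun a b h => by cases h; rfl
  cI := fun A u => ⨆ i, (canStage K i).c A u
  rI := fun P u v => ⨆ i, (canStage K i).r P u v

/-- The canonical bag model `C(⟨∅,A⟩)` of the ontology with empty TBox:
individuals as domain, every predicate interpreted by its ABox bag. -/
def emptyCanInterp (A : BagABox) : BagInterp where
  Δ := Ind
  dne := ⟨0⟩
  indMap := id
  indInj := fun _ _ h => h
  cI := fun C a => BagABox.mult A (Assertion.conceptA C a)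
  rI := fun P a b => BagABox.mult A (Assertion.roleA P a b)

/-- `[q,z]^{C(K)}`: bag answers over the canonical model computed only over
valuations sending the variables of `z` to anonymous elements and the remaining
existential variables to individuals. -/
def CQ.restrictedAnswer (q : CQ) (K : Ontology) (z : Finset Var) (a : List Ind) : ℕ∞ :=
  bagSum (fun f : {f : Var → CanElem //
      (∀ v, v ∉ q.vars → f v = CanElem.ind 0) ∧
      q.answerVars.map f = a.map CanElem.ind ∧
      ∀ v ∈ q.existVars, (v ∈ z → CanElem.isAnon (f v)) ∧ (v ∉ z → ∃ b : Ind, f v = CanElem.ind b)} =>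
    (q.atoms.map (QAtom.mult (canInterp K) f.1)).prod)

/- ## Ma-connected subsets, realisability, and the per-`z` rewritten query -/

/-- `t` is a variable belonging to `z`. -/
def Term.IsZVar (t : Term) (z : Finset Var) : Prop := ∃ v ∈ z, t = Term.var v

/-- Adjacency in the Gaifman graph restricted to nodes that are variables of `z`. -/
def CQ.zAdj (q : CQ) (z : Finset Var) : Term → Term → Prop := fun t₁ t₂ =>
  q.gaifmanAdj t₁ t₂ ∧ t₁.IsZVar z ∧ t₂.IsZVar z

/-- `z'` is maximally connected in the anonymous part (ma-connected) within `z`. -/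
def CQ.MAConnected (q : CQ) (z z' : Finset Var) : Prop :=
  z' ⊆ z ∧
  (∀ v ∈ z', ∀ w ∈ z, Relation.ReflTransGen (q.zAdj z) (Term.var v) (Term.var w) → w ∈ z') ∧
  (∀ v ∈ z', ∀ w ∈ z', Relation.ReflTransGen (q.zAdj z) (Term.var v) (Term.var w))

/-- `φ_{z'}`: the subconjunction of all atoms of `q` mentioning a variable of `z'`. -/
def CQ.subAtoms (q : CQ) (z' : Finset Var) : List QAtom :=
  q.atoms.filter (fun atm => decide (∃ v ∈ z', v ∈ QAtom.vars atm))

def termsOfList (l : List QAtom) : List Term :=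
  l.foldr (fun atm acc => QAtom.terms atm ++ acc) []

/-- `t_{z'}`: all terms occurring in `φ_{z'}` that are not variables of `z`. -/
def CQ.tTerms (q : CQ) (z z' : Finset Var) : List Term :=
  (termsOfList (q.subAtoms z')).filter (fun t => decide (¬ t.IsZVar z))

/-- `atm` is a legitimate choice of `α_{z'}`: an atom of `φ_{z'}` of the form
`P(t,z)` or `P(z,t)` with `z ∈ z'` and the term `t` not a variable of `z`. -/
def IsAlphaFor (q : CQ) (z z' : Finset Var) (atm : QAtom) : Prop :=
  atm ∈ q.subAtoms z' ∧
  ((∃ P t v, v ∈ z' ∧ ¬ Term.IsZVar t z ∧ atm = QAtom.roleAt P t (Term.var v)) ∨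
   (∃ P t v, v ∈ z' ∧ ¬ Term.IsZVar t z ∧ atm = QAtom.roleAt P (Term.var v) t))

def CQ.inds (q : CQ) : List Ind :=
  (termsOfList q.atoms).foldr (fun t acc => t.indsOf ++ acc) []

def CQ.maxInd (q : CQ) : Ind := q.inds.foldr max 0

/-- The individual `a` of `q^a_{z'}`: the individual among `t_{z'}` if one
exists, and a fresh individual otherwise. -/
def freshA (q : CQ) (z z' : Finset Var) : Ind :=
  if h : ∃ c : Ind, Term.ind c ∈ q.tTerms z z' then h.choose else q.maxInd + 1

/-- A fresh individual `b` (distinct from `freshA`). -/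
def freshB (q : CQ) : Ind := q.maxInd + 2

/-- The one-assertion bag ABox `A'` used to test realisability: `{P(a,b)}` if
`α_{z'} = P(t,z)` and `{P(b,a)}` if `α_{z'} = P(z,t)`. -/
def alphaABox (z' : Finset Var) (atm : QAtom) (a b : Ind) : BagABox :=
  match atm with
  | QAtom.roleAt P _ t₂ =>
      if Term.IsZVar t₂ z' then {Assertion.roleA P a b} else {Assertion.roleA P b a}
  | _ => 0

def subVars (q : CQ) (z' : Finset Var) : List Var :=
  (q.subAtoms z').foldr (fun atm acc => QAtom.vars atm ++ acc) []

/-- The bag answer `(q^a_{z'})^{C(⟨T,A'⟩)}(⟨⟩)` of the Boolean query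
`q^a_{z'}() = ∃x'.∃z'. φ_{z'} ∧ ⋀_{t ∈ t_{z'}}(t = a) ∧ ⋀_{z ∈ z'}(z ≠ a)`
over the canonical model of `⟨T,A'⟩`. -/
def realQAnswer (T : TBox) (q : CQ) (z z' : Finset Var) (atm : QAtom) : ℕ∞ :=
  bagSum (fun f : {f : Var → CanElem //
      (∀ v, v ∉ subVars q z' → f v = CanElem.ind 0) ∧
      (∀ t ∈ q.tTerms z z',
        termVal (canInterp ⟨T, alphaABox z' atm (freshA q z z') (freshB q)⟩) f t
          = CanElem.ind (freshA q z z')) ∧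
      ∀ v ∈ z', f v ≠ CanElem.ind (freshA q z z')} =>
    ((q.subAtoms z').map
      (QAtom.mult (canInterp ⟨T, alphaABox z' atm (freshA q z z') (freshB q)⟩) f.1)).prod)

/-- Equality-consistency of `z`: no equality atom `z = t` with `z ∈ z` and `t ∉ z`. -/
def EqConsistent (q : CQ) (z : Finset Var) : Prop :=
  ∀ v t, QAtom.eqAt v t ∈ q.atoms → v ∈ z → Term.IsZVar t z

/-- The ma-connected subset `z'` is realisable by `T` (w.r.t. the chosen `α_{z'}`). -/
def RealisableMA (T : TBox) (q : CQ) (z z' : Finset Var) (atm : QAtom) : Prop :=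
  1 ≤ realQAnswer T q z z' atm

/-- `z` is realisable by `T`: equality-consistent and every nonempty
ma-connected subset of `z` is realisable. -/
def RealisableZ (T : TBox) (q : CQ) (z : Finset Var) (alpha : Finset Var → QAtom) : Prop :=
  EqConsistent q z ∧
  ∀ z' : Finset Var, q.MAConnected z z' → z'.Nonempty → RealisableMA T q z z' (alpha z')

/-- The nonempty ma-connected subsets of `z`. -/
def maSets (q : CQ) (z : Finset Var) : Finset (Finset Var) :=
  z.powerset.filter (fun z' => q.MAConnected z z' ∧ z'.Nonempty)

def tTermVars (q : CQ) (z z' : Finset Var) : List Var :=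
  (q.tTerms z z').foldr (fun t acc => Term.varsOf t ++ acc) []

/-- The equalities identifying all the terms of `t_{z'}`. -/
def eqAtomsFor (q : CQ) (z z' : Finset Var) : List QAtom :=
  (tTermVars q z z').foldr
    (fun v acc => ((q.tTerms z z').map (fun t => QAtom.eqAt v t)) ++ acc) []

/-- Atoms of `q_z`: the atoms of `q` not mentioning a variable of `z`, plus,
for each nonempty ma-connected `z' ⊆ z`, the atom `α_{z'}` together with the
equalities identifying the terms of `t_{z'}`. -/
def qzAtoms (q : CQ) (z : Finset Var) (alpha : Finset Var → QAtom) : List QAtom :=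
  q.atoms.filter (fun atm => decide (¬ ∃ v ∈ z, v ∈ QAtom.vars atm))
    ++ (maSets q z).toList.foldr (fun z' acc => alpha z' :: (eqAtomsFor q z z' ++ acc)) []

/-- The CQ `q_z(x) = ∃y'. φ_z(x,y')`. -/
def qz (q : CQ) (z : Finset Var) (alpha : Finset Var → QAtom) : CQ where
  answerVars := q.answerVars
  existVars := q.existVars.filter (fun v => decide (∃ atm ∈ qzAtoms q z alpha, v ∈ QAtom.vars atm))
  atoms := qzAtoms q z alpha

/- ## The BALG rewriting `q̄` -/

/-- Value of an atom of `q_z` after the rewriting step 3 (`chasing back'' with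
the TBox): concept atoms `A(t)` become `⋁_{T ⊨ C ⊑ A} ζ_C(t)`, role atoms with a
`z`-variable become the corresponding truncated difference, and the remaining
atoms are evaluated as before. -/
def rewAtomVal (T : TBox) (I : BagInterp) (z : Finset Var) (f : Var → I.Δ) : QAtom → ℕ∞
  | QAtom.conceptAt A t => cclI T I (DLConcept.atomic A) (termVal I f t)
  | QAtom.roleAt P t₁ t₂ =>
      if Term.IsZVar t₂ z then
        cclI T I (DLConcept.ex (Role.atomic P)) (termVal I f t₁)
          - I.conceptMult (DLConcept.ex (Role.atomic P)) (termVal I f t₁)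
      else if Term.IsZVar t₁ z then
        cclI T I (DLConcept.ex (Role.inv P)) (termVal I f t₂)
          - I.conceptMult (DLConcept.ex (Role.inv P)) (termVal I f t₂)
      else I.rI P (termVal I f t₁) (termVal I f t₂)
  | QAtom.eqAt v t => if f v = termVal I f t then 1 else 0

/-- Bag answers of the BALG query `q̄_z`, obtained from `q_z` by projecting only
the variables of `y' ∖ z` and replacing atoms as in `rewAtomVal`. -/
def rewAnswer (T : TBox) (qq : CQ) (z : Finset Var) (I : BagInterp) (a : List Ind) : ℕ∞ :=
  bagSum (fun f : {f : Var → I.Δ //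
      (∀ v, v ∉ qq.answerVars ++ qq.existVars.filter (fun u => decide (u ∉ z)) →
        f v = I.indMap 0) ∧
      qq.answerVars.map f = a.map I.indMap} =>
    (qq.atoms.map (rewAtomVal T I z f.1)).prod)

/- ## BALG¹_ε queries -/

def Term.fvars (t : Term) : Finset Var :=
  match t with
  | Term.var v => {v}
  | Term.ind _ => ∅

/-- Syntax of BALG¹_ε queries. -/
inductive BQuery where
  | atomC : AtomicConcept → Term → BQuery
  | atomR : AtomicRole → Term → Term → BQuery
  | conj : BQuery → BQuery → BQuery
  | eqSel : BQuery → Var → Term → BQuery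
  | proj : List Var → BQuery → BQuery
  | maxU : BQuery → BQuery → BQuery
  | arithU : BQuery → BQuery → BQuery
  | diff : BQuery → BQuery → BQuery

/-- Answer variables of a BALG¹_ε query. -/
def BQuery.fv : BQuery → Finset Var
  | BQuery.atomC _ t => t.fvars
  | BQuery.atomR _ t₁ t₂ => t₁.fvars ∪ t₂.fvars
  | BQuery.conj q₁ q₂ => q₁.fv ∪ q₂.fv
  | BQuery.eqSel q _ t => q.fv ∪ t.fvars
  | BQuery.proj ys q => q.fv \ ys.toFinset
  | BQuery.maxU q₁ _ => q₁.fv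
  | BQuery.arithU q₁ _ => q₁.fv
  | BQuery.diff q₁ _ => q₁.fv

/-- Well-formedness of BALG¹_ε queries. -/
def BQuery.WF : BQuery → Prop
  | BQuery.atomC _ _ => True
  | BQuery.atomR _ _ _ => True
  | BQuery.conj q₁ q₂ => q₁.WF ∧ q₂.WF
  | BQuery.eqSel q x _ => q.WF ∧ x ∈ q.fv
  | BQuery.proj _ q => q.WF
  | BQuery.maxU q₁ q₂ => q₁.WF ∧ q₂.WF ∧ q₁.fv = q₂.fv
  | BQuery.arithU q₁ q₂ => q₁.WF ∧ q₂.WF ∧ q₁.fv = q₂.fv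
  | BQuery.diff q₁ q₂ => q₁.WF ∧ q₂.WF ∧ q₁.fv = q₂.fv

/-- Semantics of BALG¹_ε queries under a valuation of the answer variables. -/
def BQuery.val (I : BagInterp) : BQuery → (Var → I.Δ) → ℕ∞
  | BQuery.atomC A t, f => I.cI A (termVal I f t)
  | BQuery.atomR P t₁ t₂, f => I.rI P (termVal I f t₁) (termVal I f t₂)
  | BQuery.conj q₁ q₂, f => q₁.val I f * q₂.val I f
  | BQuery.eqSel q x t, f => if f x = termVal I f t then q.val I f else 0
  | BQuery.proj ys q, f => bagSum (fun g : {g : Var → I.Δ // ∀ v, v ∉ ys → g v = f v} => q.val I g.1)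
  | BQuery.maxU q₁ q₂, f => max (q₁.val I f) (q₂.val I f)
  | BQuery.arithU q₁ q₂, f => q₁.val I f + q₂.val I f
  | BQuery.diff q₁ q₂, f => q₁.val I f - q₂.val I f

/-- Bag answers of a BALG¹_ε query with answer variables `xs` on a tuple `a`. -/
def BQuery.answer (Q : BQuery) (xs : List Var) (I : BagInterp) (a : List Ind) : ℕ∞ :=
  if a.length = xs.length then Q.val I (fun v => I.indMap (a.getD (xs.idxOf v) 0)) else 0

/- ## Enumerated bags, e-homomorphisms, and e-valuations -/

/-- Enumerated copies of a bag of domain elements (for an atomic concept). -/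
def EBagC (I : BagInterp) (A : AtomicConcept) : Type :=
  {p : I.Δ × ℕ // 1 ≤ p.2 ∧ (p.2 : ℕ∞) ≤ I.cI A p.1}

/-- Enumerated copies of a bag of pairs (for an atomic role). -/
def EBagR (I : BagInterp) (P : AtomicRole) : Type :=
  {p : (I.Δ × I.Δ) × ℕ // 1 ≤ p.2 ∧ (p.2 : ℕ∞) ≤ I.rI P p.1.1 p.1.2}

/-- An e-homomorphism between the enumerated versions of two bag interpretations. -/
structure EHom (I J : BagInterp) where
  h : I.Δ → J.Δ
  hInd : ∀ a : Ind, h (I.indMap a) = J.indMap a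
  hC : ∀ A : AtomicConcept, EBagC I A → EBagC J A
  hC_fst : ∀ (A : AtomicConcept) (x : EBagC I A), (hC A x).1.1 = h x.1.1
  hR : ∀ P : AtomicRole, EBagR I P → EBagR J P
  hR_fst : ∀ (P : AtomicRole) (x : EBagR I P), (hR P x).1.1 = (h x.1.1.1, h x.1.1.2)

/-- Predicate-injectivity on individuals of an e-homomorphism. -/
def EHom.PredInj {I J : BagInterp} (e : EHom I J) : Prop :=
  ∀ u : I.Δ, (∃ a : Ind, e.h u = J.indMap a) →
    (∀ A : AtomicConcept, ∀ x y : EBagC I A,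
      x.1.1 = u → y.1.1 = u → x.1.2 ≠ y.1.2 → e.hC A x ≠ e.hC A y) ∧
    (∀ P : AtomicRole, ∀ x y : EBagR I P, x.1.1.1 = u → y.1.1.1 = u →
      (x.1.1.2, x.1.2) ≠ (y.1.1.2, y.1.2) → e.hR P x ≠ e.hR P y) ∧
    (∀ P : AtomicRole, ∀ x y : EBagR I P, x.1.1.2 = u → y.1.1.2 = u →
      (x.1.1.1, x.1.2) ≠ (y.1.1.1, y.1.2) → e.hR P x ≠ e.hR P y)

/-- Enumerated atoms of a CQ (seen as a bag of atoms). -/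
def EAtom (q : CQ) : Type := {p : QAtom × ℕ // 1 ≤ p.2 ∧ p.2 ≤ q.atoms.count p.1}

/-- An e-valuation of the enumerated query `q^e` over the enumerated
interpretation `I^e`. -/
structure EVal (q : CQ) (I : BagInterp) where
  ν : Var → I.Δ
  hjunk : ∀ v, v ∉ q.vars → ν v = I.indMap 0
  heq : ∀ z t, QAtom.eqAt z t ∈ q.atoms → ν z = termVal I ν t
  ℓ : EAtom q → ℕ
  hone : ∀ e : EAtom q, 1 ≤ ℓ e
  hconcept : ∀ (e : EAtom q) (A : AtomicConcept) (t : Term),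
    e.1.1 = QAtom.conceptAt A t → (ℓ e : ℕ∞) ≤ I.cI A (termVal I ν t)
  hrole : ∀ (e : EAtom q) (P : AtomicRole) (t₁ t₂ : Term),
    e.1.1 = QAtom.roleAt P t₁ t₂ → (ℓ e : ℕ∞) ≤ I.rI P (termVal I ν t₁) (termVal I ν t₂)
  heqm : ∀ (e : EAtom q) (z : Var) (t : Term), e.1.1 = QAtom.eqAt z t → ℓ e = 1

/-- The tuple of domain elements to which an e-atom is sent by an e-valuation. -/
def EVal.imgTerms {q : CQ} {I : BagInterp} (ev : EVal q I) (e : EAtom q) : List I.Δ :=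
  (QAtom.terms e.1.1).map (termVal I ev.ν)

/-- The enumerated image of an e-atom under an e-valuation. -/
def EVal.img {q : CQ} {I : BagInterp} (ev : EVal q I) (e : EAtom q) : List I.Δ × ℕ :=
  (ev.imgTerms e, ev.ℓ e)

/- ## Auxiliary concrete queries -/

/-- The CQ `ζ_C(x)`: `A(x)`, `∃y.P(x,y)` or `∃y.P(y,x)`. -/
def zetaCQ : DLConcept → CQ
  | DLConcept.atomic A => ⟨[0], [], [QAtom.conceptAt A (Term.var 0)]⟩
  | DLConcept.ex (Role.atomic P) => ⟨[0], [1], [QAtom.roleAt P (Term.var 0) (Term.var 1)]⟩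
  | DLConcept.ex (Role.inv P) => ⟨[0], [1], [QAtom.roleAt P (Term.var 1) (Term.var 0)]⟩

/-- The CQ `q(x) = R(x,x)`. -/
def selfCQ (P : AtomicRole) : CQ := ⟨[0], [], [QAtom.roleAt P (Term.var 0) (Term.var 0)]⟩

/-- Vertex = atomic concept 0, ACol = atomic concept 1, Edge = atomic role 0,
hasColour = atomic role 1.  TBox `{Vertex ⊑ ∃hasColour, ∃hasColour⁻ ⊑ ACol}`. -/
def tbox3 : TBox :=
  {TBoxAxiom.cIncl (DLConcept.atomic 0) (DLConcept.ex (Role.atomic 1)),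
   TBoxAxiom.cIncl (DLConcept.ex (Role.inv 1)) (DLConcept.atomic 1)}

/-- The bag ABox `A_G` for a graph `G = (V,E)` (vertices `u` encoded as
individuals `u+4`, the fresh vertex `a` as `0` and the fresh colours `r,g,b`
as `1,2,3`): `Vertex(u)` for `u ∈ V`; `Edge(u,v)` for `(u,v) ∈ E`;
`ACol(r)` with multiplicity `|V|+1`, `ACol(g)` and `ACol(b)` with multiplicity
`|V|`; and `Vertex(a)`, `Edge(a,a)`, `hasColour(a,r)`, each with multiplicity 1. -/
def aboxG (V : Finset ℕ) (E : Finset (ℕ × ℕ)) : BagABox :=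
  V.val.map (fun u => Assertion.conceptA 0 (u + 4))
    + E.val.map (fun p => Assertion.roleA 0 (p.1 + 4) (p.2 + 4))
    + Multiset.replicate (V.card + 1) (Assertion.conceptA 1 1)
    + Multiset.replicate V.card (Assertion.conceptA 1 2)
    + Multiset.replicate V.card (Assertion.conceptA 1 3)
    + {Assertion.conceptA 0 0, Assertion.roleA 0 0 0, Assertion.roleA 1 0 1}

/-- The Boolean CQ
`q() = ∃x,y,z,w. Edge(x,y) ∧ hasColour(x,z) ∧ hasColour(y,z) ∧ ACol(w)`. -/
def q3 : CQ :=
  ⟨[], [0, 1, 2, 3],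
    [QAtom.roleAt 0 (Term.var 0) (Term.var 1),
     QAtom.roleAt 1 (Term.var 0) (Term.var 2),
     QAtom.roleAt 1 (Term.var 1) (Term.var 2),
     QAtom.conceptAt 1 (Term.var 3)]⟩


/- ### Auxiliary lemmas -/

lemma le_bagSum' {α : Type*} (f : α → ℕ∞) (s : Finset α) : ∑ x ∈ s, f x ≤ bagSum f :=
  le_iSup (fun s : Finset α => ∑ x ∈ s, f x) s

lemma single_le_bagSum {α : Type*} (f : α → ℕ∞) (x : α) : f x ≤ bagSum f := by
  simpa using le_bagSum' f {x}

lemma bagSum_le' {α : Type*} (f : α → ℕ∞) (c : ℕ∞) (h : ∀ s : Finset α, ∑ x ∈ s, f x ≤ c) :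
    bagSum f ≤ c := iSup_le h

lemma exists_one_le_of_bagSum {α : Type*} (f : α → ℕ∞) (h : 1 ≤ bagSum f) : ∃ x, 1 ≤ f x := by
  by_contra hc
  push_neg at hc
  have hz : ∀ x, f x = 0 := by
    intro x
    rcases eq_or_ne (f x) 0 with h0 | h0
    · exact h0
    · exact absurd (ENat.one_le_iff_ne_zero.mpr h0) (not_le.mpr (hc x))
  have hb : bagSum f = 0 := by
    apply le_antisymm _ zero_le
    exact bagSum_le' _ _ (fun s => by simp [hz])
  simp [hb] at h

lemma bagSum_le_sum {α : Type*} (f : α → ℕ∞) (T : Finset α) (h : ∀ x, f x ≠ 0 → x ∈ T) :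
    bagSum f ≤ ∑ x ∈ T, f x := by
  apply bagSum_le'
  intro s
  calc ∑ x ∈ s, f x = ∑ x ∈ s.filter (· ∈ T), f x := by
        rw [Finset.sum_filter_of_ne]
        intro x _ hx; exact h x hx
    _ ≤ ∑ x ∈ T, f x := Finset.sum_le_sum_of_subset (by intro x hx; simp at hx; exact hx.2)

lemma card_filter_eq_ite {α : Type*} [DecidableEq α] (s : Finset α) (p : α → Prop)
    [DecidablePred p] (x : α) (hp : ∀ u, p u ↔ u = x) :
    Multiset.card (s.val.filter p) = if x ∈ s then 1 else 0 := by
  have h1 : s.val.filter p = s.val.filter (x = ·) := by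
    apply Multiset.filter_congr
    intro u _
    rw [hp u, eq_comm]
  rw [h1, ← Multiset.countP_eq_card_filter]
  have h2 : Multiset.countP (x = ·) s.val = Multiset.count x s.val := rfl
  rw [h2]
  split_ifs with h
  · exact Multiset.count_eq_one_of_mem s.nodup h
  · exact Multiset.count_eq_zero_of_notMem h

lemma card_filter_eq_zero' {α : Type*} (s : Multiset α) (p : α → Prop)
    [DecidablePred p] (hp : ∀ u ∈ s, ¬ p u) :
    Multiset.card (s.filter p) = 0 := by
  rw [Multiset.filter_eq_nil.mpr hp]; rfl

lemma nat_shift_iff (a u : ℕ) (ha : 4 ≤ a) : a = u + 4 ↔ u = a - 4 := by omega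

lemma nat_shift_eq (a u : ℕ) (h : a = u + 4) : u = a - 4 ∧ 4 ≤ a := by omega

lemma nat_shift_eq' (a u : ℕ) (h : u = a - 4) (ha : 4 ≤ a) : a = u + 4 := by omega


lemma count_concept_triple (A a : ℕ) :
    Multiset.count (Assertion.conceptA A a)
      ({Assertion.conceptA 0 0, Assertion.roleA 0 0 0, Assertion.roleA 1 0 1} :
        Multiset Assertion) = if A = 0 ∧ a = 0 then 1 else 0 := by
  by_cases h : A = 0 ∧ a = 0
  · obtain ⟨h1, h2⟩ := h
    subst h1; subst h2
    rw [if_pos ⟨rfl, rfl⟩]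
    decide
  · rw [if_neg h, Multiset.count_eq_zero]
    intro hm
    simp only [Multiset.insert_eq_cons, Multiset.mem_cons, Multiset.mem_singleton] at hm
    rcases hm with h' | h' | h'
    · injection h' with e1 e2
      exact h ⟨e1, e2⟩
    · exact Assertion.noConfusion h'
    · exact Assertion.noConfusion h'

lemma count_role_triple (P a b : ℕ) :
    Multiset.count (Assertion.roleA P a b)
      ({Assertion.conceptA 0 0, Assertion.roleA 0 0 0, Assertion.roleA 1 0 1} :
        Multiset Assertion) =
      (if P = 0 ∧ a = 0 ∧ b = 0 then 1 else 0) + (if P = 1 ∧ a = 0 ∧ b = 1 then 1 else 0) := by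
  by_cases h1 : P = 0 ∧ a = 0 ∧ b = 0
  · obtain ⟨e1, e2, e3⟩ := h1
    subst e1; subst e2; subst e3
    rw [if_pos ⟨rfl, rfl, rfl⟩, if_neg (by rintro ⟨e, -⟩; exact absurd e (by decide))]
    decide
  · rw [if_neg h1]
    by_cases h2 : P = 1 ∧ a = 0 ∧ b = 1
    · obtain ⟨e1, e2, e3⟩ := h2
      subst e1; subst e2; subst e3
      rw [if_pos ⟨rfl, rfl, rfl⟩]
      decide
    · rw [if_neg h2, Multiset.count_eq_zero]
      intro hm
      simp only [Multiset.insert_eq_cons, Multiset.mem_cons, Multiset.mem_singleton] at hm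
      rcases hm with h' | h' | h'
      · exact Assertion.noConfusion h'
      · injection h' with e1 e2 e3
        exact h1 ⟨e1, e2, e3⟩
      · injection h' with e1 e2 e3
        exact h2 ⟨e1, e2, e3⟩

lemma count_repl_concept (A a B b n : ℕ) :
    Multiset.count (Assertion.conceptA A a)
      (Multiset.replicate n (Assertion.conceptA B b)) = if A = B ∧ a = b then n else 0 := by
  by_cases h : A = B ∧ a = b
  · obtain ⟨h1, h2⟩ := h
    subst h1; subst h2
    rw [if_pos ⟨rfl, rfl⟩, Multiset.count_replicate_self]
  · rw [if_neg h, Multiset.count_replicate, if_neg]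
    intro hc
    injection hc with e1 e2
    exact h ⟨e1.symm, e2.symm⟩

lemma count_role_repl (P a b B c n : ℕ) :
    Multiset.count (Assertion.roleA P a b)
      (Multiset.replicate n (Assertion.conceptA B c)) = 0 := by
  rw [Multiset.count_replicate, if_neg]
  exact fun hc => Assertion.noConfusion hc

lemma countV_abox (V : Finset ℕ) (E : Finset (ℕ × ℕ)) (A a : ℕ) :
    (aboxG V E).count (Assertion.conceptA A a) =
      (if A = 0 ∧ a = 0 then 1 else 0) + (if A = 0 ∧ a - 4 ∈ V ∧ 4 ≤ a then 1 else 0)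
        + (if A = 1 ∧ a = 1 then V.card + 1 else 0) + (if A = 1 ∧ a = 2 then V.card else 0)
        + (if A = 1 ∧ a = 3 then V.card else 0) := by
  have hV : Multiset.card (V.val.filter
      (fun u => Assertion.conceptA A a = Assertion.conceptA 0 (u + 4))) =
      if A = 0 ∧ a - 4 ∈ V ∧ 4 ≤ a then 1 else 0 := by
    by_cases h : A = 0 ∧ 4 ≤ a
    · obtain ⟨hA, ha⟩ := h
      rw [card_filter_eq_ite V _ (a - 4) (fun u => by
        subst hA
        simp only [Assertion.conceptA.injEq, true_and]
        exact nat_shift_iff a u ha)]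
      simp [hA, ha]
    · rw [card_filter_eq_zero' _ _ (fun u _ => ?_)]
      · split_ifs with h2
        · exact absurd ⟨h2.1, h2.2.2⟩ h
        · rfl
      · simp only [Assertion.conceptA.injEq, not_and]
        intro hA hau
        exact h ⟨hA, (nat_shift_eq a u hau).2⟩
  have hE : Multiset.card (E.val.filter
      (fun p => Assertion.conceptA A a = Assertion.roleA 0 (p.1 + 4) (p.2 + 4))) = 0 :=
    card_filter_eq_zero' _ _ (fun u _ => by simp)
  rw [aboxG]
  simp only [Multiset.count_add, Multiset.count_map]
  rw [hV, hE, count_repl_concept, count_repl_concept, count_repl_concept, count_concept_triple]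
  split_ifs <;> omega

lemma countR_abox (V : Finset ℕ) (E : Finset (ℕ × ℕ)) (P a b : ℕ) :
    (aboxG V E).count (Assertion.roleA P a b) =
      (if P = 0 ∧ (a - 4, b - 4) ∈ E ∧ 4 ≤ a ∧ 4 ≤ b then 1 else 0)
        + (if P = 0 ∧ a = 0 ∧ b = 0 then 1 else 0)
        + (if P = 1 ∧ a = 0 ∧ b = 1 then 1 else 0) := by
  have hV : Multiset.card (V.val.filter
      (fun u => Assertion.roleA P a b = Assertion.conceptA 0 (u + 4))) = 0 :=
    card_filter_eq_zero' _ _ (fun u _ => by simp)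
  have hE : Multiset.card (E.val.filter
      (fun p => Assertion.roleA P a b = Assertion.roleA 0 (p.1 + 4) (p.2 + 4))) =
      if P = 0 ∧ (a - 4, b - 4) ∈ E ∧ 4 ≤ a ∧ 4 ≤ b then 1 else 0 := by
    by_cases h : P = 0 ∧ 4 ≤ a ∧ 4 ≤ b
    · obtain ⟨hP, ha, hb⟩ := h
      rw [card_filter_eq_ite E _ (a - 4, b - 4) (fun p => by
        subst hP
        simp only [Assertion.roleA.injEq, true_and, Prod.ext_iff]
        constructor
        · rintro ⟨h1, h2⟩
          exact ⟨(nat_shift_eq a p.1 h1).1, (nat_shift_eq b p.2 h2).1⟩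
        · rintro ⟨h1, h2⟩
          exact ⟨nat_shift_eq' a p.1 h1 ha, nat_shift_eq' b p.2 h2 hb⟩)]
      simp [hP, ha, hb]
    · rw [card_filter_eq_zero' _ _ (fun p _ => ?_)]
      · split_ifs with h2
        · exact absurd ⟨h2.1, h2.2.2.1, h2.2.2.2⟩ h
        · rfl
      · simp only [Assertion.roleA.injEq, not_and]
        intro hP h1 h2
        exact h ⟨hP, (nat_shift_eq a p.1 h1).2, (nat_shift_eq b p.2 h2).2⟩
  rw [aboxG]
  simp only [Multiset.count_add, Multiset.count_map]
  rw [hV, hE, count_role_repl, count_role_repl, count_role_repl, count_role_triple]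
  split_ifs <;> omega


/- ### Query evaluation infrastructure -/

/-- Valuations for the Boolean query `q3`. -/
def Q3Val (I : BagInterp) : Type :=
  {f : Var → I.Δ // (∀ v, v ∉ q3.vars → f v = I.indMap 0) ∧
    List.map f q3.answerVars = List.map I.indMap ([] : List Ind)}

lemma bagAnswer_q3 (I : BagInterp) :
    q3.bagAnswer I [] = bagSum (fun f : Q3Val I => (q3.atoms.map (QAtom.mult I f.1)).prod) :=
  rfl

lemma q3_prod (I : BagInterp) (f : Var → I.Δ) :
    (q3.atoms.map (QAtom.mult I f)).prod =
      I.rI 0 (f 0) (f 1) * (I.rI 1 (f 0) (f 2) * (I.rI 1 (f 1) (f 2) * (I.cI 1 (f 3) * 1))) := by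
  simp [q3, QAtom.mult, termVal]

def val4 (I : BagInterp) (x y z w : I.Δ) : Var → I.Δ := fun v =>
  if v = 0 then x else if v = 1 then y else if v = 2 then z else if v = 3 then w else I.indMap 0

lemma val4_junk (I : BagInterp) (x y z w : I.Δ) :
    ∀ v, v ∉ q3.vars → val4 I x y z w v = I.indMap 0 := by
  intro v hv
  simp only [q3, CQ.vars, List.nil_append, List.mem_cons, List.not_mem_nil, or_false,
    not_or] at hv
  obtain ⟨h0, h1, h2, h3⟩ := hv
  simp [val4, h0, h1, h2, h3]

def q3val (I : BagInterp) (x y z w : I.Δ) : Q3Val I :=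
  ⟨val4 I x y z w, val4_junk I x y z w, rfl⟩

@[simp] lemma q3val_0 (I : BagInterp) (x y z w : I.Δ) : (q3val I x y z w).1 0 = x := rfl
@[simp] lemma q3val_1 (I : BagInterp) (x y z w : I.Δ) : (q3val I x y z w).1 1 = y := rfl
@[simp] lemma q3val_2 (I : BagInterp) (x y z w : I.Δ) : (q3val I x y z w).1 2 = z := rfl
@[simp] lemma q3val_3 (I : BagInterp) (x y z w : I.Δ) : (q3val I x y z w).1 3 = w := rfl

lemma q3val_prod (I : BagInterp) (x y z w : I.Δ) :
    (q3.atoms.map (QAtom.mult I (q3val I x y z w).1)).prod =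
      I.rI 0 x y * (I.rI 1 x z * (I.rI 1 y z * (I.cI 1 w * 1))) := by
  rw [q3_prod]
  simp

lemma q3val_ne0 {I : BagInterp} {x y z w x' y' z' w' : I.Δ} (h : x ≠ x') :
    q3val I x y z w ≠ q3val I x' y' z' w' := fun he => h (congrArg (fun F => F.1 0) he)

lemma q3val_ne3 {I : BagInterp} {x y z w x' y' z' w' : I.Δ} (h : w ≠ w') :
    q3val I x y z w ≠ q3val I x' y' z' w' := fun he => h (congrArg (fun F => F.1 3) he)

lemma sum4_le_bagSum {α : Type*} (f : α → ℕ∞) (a b c d : α) (hab : a ≠ b) (hac : a ≠ c)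
    (had : a ≠ d) (hbc : b ≠ c) (hbd : b ≠ d) (hcd : c ≠ d) :
    f a + f b + f c + f d ≤ bagSum f := by
  have h := le_bagSum' f {a, b, c, d}
  rw [Finset.sum_insert (by simp [hab, hac, had]),
    Finset.sum_insert (by simp [hbc, hbd]), Finset.sum_insert (by simp [hcd]),
    Finset.sum_singleton] at h
  calc f a + f b + f c + f d = f a + (f b + (f c + f d)) := by ring
    _ ≤ _ := h

lemma prod_ge_of_ones {x y z w c : ℕ∞} (hx : 1 ≤ x) (hy : 1 ≤ y) (hz : 1 ≤ z) (hc : c ≤ w) :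
    c ≤ x * (y * (z * (w * 1))) := by
  calc c = 1 * (1 * (1 * (c * 1))) := by ring
    _ ≤ x * (y * (z * (w * 1))) := by
        exact mul_le_mul' hx (mul_le_mul' hy (mul_le_mul' hz (mul_le_mul' hc le_rfl)))


/- ### Facts holding in every model -/

section ModelFacts

variable (V : Finset ℕ) (E : Finset (ℕ × ℕ)) (I : BagInterp)
  (hM : I.IsModel ⟨tbox3, aboxG V E⟩)

include hM

lemma fact_abox (s : Assertion) :
    ((aboxG V E).count s : ℕ∞) ≤ I.assertMult s := hM.2 s

lemma fact_edge_aa : 1 ≤ I.rI 0 (I.indMap 0) (I.indMap 0) := by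
  have h := fact_abox V E I hM (Assertion.roleA 0 0 0)
  rw [countR_abox] at h
  simpa [BagInterp.assertMult] using h

lemma fact_hc_ar : 1 ≤ I.rI 1 (I.indMap 0) (I.indMap 1) := by
  have h := fact_abox V E I hM (Assertion.roleA 1 0 1)
  rw [countR_abox] at h
  simpa [BagInterp.assertMult] using h

lemma fact_acol_r : ((V.card + 1 : ℕ) : ℕ∞) ≤ I.cI 1 (I.indMap 1) := by
  have h := fact_abox V E I hM (Assertion.conceptA 1 1)
  rw [countV_abox] at h
  simpa [BagInterp.assertMult] using h

lemma fact_acol_g : ((V.card : ℕ) : ℕ∞) ≤ I.cI 1 (I.indMap 2) := by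
  have h := fact_abox V E I hM (Assertion.conceptA 1 2)
  rw [countV_abox] at h
  simpa [BagInterp.assertMult] using h

lemma fact_acol_b : ((V.card : ℕ) : ℕ∞) ≤ I.cI 1 (I.indMap 3) := by
  have h := fact_abox V E I hM (Assertion.conceptA 1 3)
  rw [countV_abox] at h
  simpa [BagInterp.assertMult] using h

lemma fact_vertex {u : ℕ} (hu : u ∈ V) : 1 ≤ I.cI 0 (I.indMap (u + 4)) := by
  have h := fact_abox V E I hM (Assertion.conceptA 0 (u + 4))
  rw [countV_abox] at h
  have h4 : u + 4 - 4 = u := by omega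
  have c1 : ¬ ((0:ℕ) = 0 ∧ u + 4 = 0) := fun hc => by omega
  have c2 : (0:ℕ) = 0 ∧ u + 4 - 4 ∈ V ∧ 4 ≤ u + 4 := ⟨rfl, h4.symm ▸ hu, by omega⟩
  have c3 : ¬ ((0:ℕ) = 1 ∧ u + 4 = 1) := fun hc => by omega
  have c4 : ¬ ((0:ℕ) = 1 ∧ u + 4 = 2) := fun hc => by omega
  have c5 : ¬ ((0:ℕ) = 1 ∧ u + 4 = 3) := fun hc => by omega
  rw [if_neg c1, if_pos c2, if_neg c3, if_neg c4, if_neg c5] at h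
  simpa [BagInterp.assertMult] using h

lemma fact_edge {u v : ℕ} (huv : (u, v) ∈ E) :
    1 ≤ I.rI 0 (I.indMap (u + 4)) (I.indMap (v + 4)) := by
  have h := fact_abox V E I hM (Assertion.roleA 0 (u + 4) (v + 4))
  rw [countR_abox] at h
  have h4 : u + 4 - 4 = u := by omega
  have h4' : v + 4 - 4 = v := by omega
  have c1 : (0:ℕ) = 0 ∧ (u + 4 - 4, v + 4 - 4) ∈ E ∧ 4 ≤ u + 4 ∧ 4 ≤ v + 4 :=
    ⟨rfl, by rw [h4, h4']; exact huv, by omega, by omega⟩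
  have c2 : ¬ ((0:ℕ) = 0 ∧ u + 4 = 0 ∧ v + 4 = 0) := fun hc => by omega
  have c3 : ¬ ((0:ℕ) = 1 ∧ u + 4 = 0 ∧ v + 4 = 1) := fun hc => by omega
  rw [if_pos c1, if_neg c2, if_neg c3] at h
  simpa [BagInterp.assertMult] using h

lemma fact_tb1 : ∀ u, I.cI 0 u ≤ bagSum (fun v => I.rI 1 u v) := by
  have h := hM.1 (TBoxAxiom.cIncl (DLConcept.atomic 0) (DLConcept.ex (Role.atomic 1)))
    (by simp [tbox3])
  intro u
  exact h u

lemma fact_tb2 : ∀ v, bagSum (fun u => I.rI 1 u v) ≤ I.cI 1 v := by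
  have h := hM.1 (TBoxAxiom.cIncl (DLConcept.ex (Role.inv 1)) (DLConcept.atomic 1))
    (by simp [tbox3])
  intro v
  exact h v

lemma fact_hc_le_acol (u v : I.Δ) : I.rI 1 u v ≤ I.cI 1 v :=
  le_trans (single_le_bagSum _ u) (fact_tb2 V E I hM v)

end ModelFacts


/- ### Lower bound in an arbitrary model -/

lemma add4_ne_zero (u : ℕ) : ¬ (u + 4 = 0) := by omega

lemma lower_bound (V : Finset ℕ) (E : Finset (ℕ × ℕ))
    (hVE : ∀ p ∈ E, p.1 ∈ V ∧ p.2 ∈ V)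
    (h3 : ¬ ∃ γ : ℕ → Fin 3, ∀ p ∈ E, γ p.1 ≠ γ p.2)
    (I : BagInterp) (hM : I.IsModel ⟨tbox3, aboxG V E⟩) :
    ((3 * V.card + 2 : ℕ) : ℕ∞) ≤ q3.bagAnswer I [] := by
  classical
  rw [bagAnswer_q3]
  set f : Q3Val I → ℕ∞ := fun F => (q3.atoms.map (QAtom.mult I F.1)).prod with hf
  have hex : ∀ u : ℕ, ∃ d : I.Δ, u ∈ V → 1 ≤ I.rI 1 (I.indMap (u + 4)) d := by
    intro u
    by_cases hu : u ∈ V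
    · have h1 : 1 ≤ I.cI 0 (I.indMap (u + 4)) := fact_vertex V E I hM hu
      have h2 := fact_tb1 V E I hM (I.indMap (u + 4))
      obtain ⟨d, hd⟩ := exists_one_le_of_bagSum _ (le_trans h1 h2)
      exact ⟨d, fun _ => hd⟩
    · exact ⟨I.indMap 0, fun h => absurd h hu⟩
  choose c hc using hex
  have hne12 : I.indMap 1 ≠ I.indMap 2 := fun h => absurd (I.indInj h) (by decide)
  have hne13 : I.indMap 1 ≠ I.indMap 3 := fun h => absurd (I.indInj h) (by decide)
  have hne23 : I.indMap 2 ≠ I.indMap 3 := fun h => absurd (I.indInj h) (by decide)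
  by_cases hprop : ∃ p ∈ E, c p.1 = c p.2
  · -- Case B: a monochromatic edge exists
    obtain ⟨p, hpE, hpc⟩ := hprop
    obtain ⟨hu, hv⟩ := hVE p hpE
    have hc1 : 1 ≤ I.rI 1 (I.indMap (p.1 + 4)) (c p.1) := hc p.1 hu
    have hc2 : 1 ≤ I.rI 1 (I.indMap (p.2 + 4)) (c p.1) := hpc ▸ hc p.2 hv
    have he : 1 ≤ I.rI 0 (I.indMap (p.1 + 4)) (I.indMap (p.2 + 4)) :=
      fact_edge V E I hM (by simpa using hpE)
    set G1 := q3val I (I.indMap (p.1 + 4)) (I.indMap (p.2 + 4)) (c p.1) (I.indMap 1) with hG1d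
    set G2 := q3val I (I.indMap (p.1 + 4)) (I.indMap (p.2 + 4)) (c p.1) (I.indMap 2) with hG2d
    set G3 := q3val I (I.indMap (p.1 + 4)) (I.indMap (p.2 + 4)) (c p.1) (I.indMap 3) with hG3d
    set H := q3val I (I.indMap 0) (I.indMap 0) (I.indMap 1) (I.indMap 1) with hHd
    have hG1 : ((V.card + 1 : ℕ) : ℕ∞) ≤ f G1 := by
      have hx := prod_ge_of_ones he hc1 hc2 (fact_acol_r V E I hM)
      rw [← q3val_prod] at hx
      exact hx
    have hG2 : ((V.card : ℕ) : ℕ∞) ≤ f G2 := by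
      have hx := prod_ge_of_ones he hc1 hc2 (fact_acol_g V E I hM)
      rw [← q3val_prod] at hx
      exact hx
    have hG3 : ((V.card : ℕ) : ℕ∞) ≤ f G3 := by
      have hx := prod_ge_of_ones he hc1 hc2 (fact_acol_b V E I hM)
      rw [← q3val_prod] at hx
      exact hx
    have hH : ((V.card + 1 : ℕ) : ℕ∞) ≤ f H := by
      have hx := prod_ge_of_ones (fact_edge_aa V E I hM) (fact_hc_ar V E I hM)
        (fact_hc_ar V E I hM) (fact_acol_r V E I hM)
      rw [← q3val_prod] at hx
      exact hx
    have hne0 : I.indMap (p.1 + 4) ≠ I.indMap 0 :=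
      fun h => add4_ne_zero p.1 (I.indInj h)
    have hsum := sum4_le_bagSum f G1 G2 G3 H
      (q3val_ne3 hne12) (q3val_ne3 hne13) (q3val_ne0 hne0)
      (q3val_ne3 hne23) (q3val_ne0 hne0) (q3val_ne0 hne0)
    refine le_trans ?_ (le_trans (add_le_add (add_le_add (add_le_add hG1 hG2) hG3) hH) hsum)
    exact_mod_cast (by omega :
      3 * V.card + 2 ≤ V.card + 1 + V.card + V.card + (V.card + 1))
  · -- Case A: the colouring is proper, so it uses at least 4 colours
    push_neg at hprop
    set S : Finset I.Δ := V.image c with hS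
    have hS4 : 4 ≤ S.card := by
      by_contra hlt
      push_neg at hlt
      have hcard : Fintype.card S ≤ Fintype.card (Fin 3) := by
        rw [Fintype.card_coe, Fintype.card_fin]
        omega
      obtain ⟨e⟩ := Function.Embedding.nonempty_of_card_le hcard
      apply h3
      refine ⟨fun u => if hu : u ∈ V then e ⟨c u, Finset.mem_image_of_mem c hu⟩ else 0, ?_⟩
      intro p hp
      obtain ⟨hu, hv⟩ := hVE p hp
      simp only [hu, hv, dite_true]
      intro hee
      have := e.injective hee
      rw [Subtype.mk.injEq] at this
      exact hprop p hp this
    have hTcard : ({I.indMap 1, I.indMap 2, I.indMap 3} : Finset I.Δ).card ≤ 3 :=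
      Finset.card_le_three
    have hpos : 0 < (S \ ({I.indMap 1, I.indMap 2, I.indMap 3} : Finset I.Δ)).card := by
      have := Finset.le_card_sdiff ({I.indMap 1, I.indMap 2, I.indMap 3} : Finset I.Δ) S
      omega
    obtain ⟨c0, hc0⟩ := Finset.card_pos.mp hpos
    rw [Finset.mem_sdiff] at hc0
    obtain ⟨hc0S, hc0T⟩ := hc0
    obtain ⟨u0, hu0, hcu0⟩ := Finset.mem_image.mp hc0S
    have hc0ne : c0 ≠ I.indMap 1 ∧ c0 ≠ I.indMap 2 ∧ c0 ≠ I.indMap 3 := by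
      refine ⟨?_, ?_, ?_⟩ <;> intro h <;> exact hc0T (by simp [h])
    have hacol0 : 1 ≤ I.cI 1 c0 :=
      le_trans (hcu0 ▸ hc u0 hu0) (fact_hc_le_acol V E I hM _ c0)
    set K1 := q3val I (I.indMap 0) (I.indMap 0) (I.indMap 1) (I.indMap 1) with hK1d
    set K2 := q3val I (I.indMap 0) (I.indMap 0) (I.indMap 1) (I.indMap 2) with hK2d
    set K3 := q3val I (I.indMap 0) (I.indMap 0) (I.indMap 1) (I.indMap 3) with hK3d
    set K4 := q3val I (I.indMap 0) (I.indMap 0) (I.indMap 1) c0 with hK4d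
    have hK1 : ((V.card + 1 : ℕ) : ℕ∞) ≤ f K1 := by
      have hx := prod_ge_of_ones (fact_edge_aa V E I hM) (fact_hc_ar V E I hM)
        (fact_hc_ar V E I hM) (fact_acol_r V E I hM)
      rw [← q3val_prod] at hx
      exact hx
    have hK2 : ((V.card : ℕ) : ℕ∞) ≤ f K2 := by
      have hx := prod_ge_of_ones (fact_edge_aa V E I hM) (fact_hc_ar V E I hM)
        (fact_hc_ar V E I hM) (fact_acol_g V E I hM)
      rw [← q3val_prod] at hx
      exact hx
    have hK3 : ((V.card : ℕ) : ℕ∞) ≤ f K3 := by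
      have hx := prod_ge_of_ones (fact_edge_aa V E I hM) (fact_hc_ar V E I hM)
        (fact_hc_ar V E I hM) (fact_acol_b V E I hM)
      rw [← q3val_prod] at hx
      exact hx
    have hK4 : (1 : ℕ∞) ≤ f K4 := by
      have hx := prod_ge_of_ones (fact_edge_aa V E I hM) (fact_hc_ar V E I hM)
        (fact_hc_ar V E I hM) hacol0
      rw [← q3val_prod] at hx
      exact hx
    have hsum := sum4_le_bagSum f K1 K2 K3 K4
      (q3val_ne3 hne12) (q3val_ne3 hne13) (q3val_ne3 (Ne.symm hc0ne.1))
      (q3val_ne3 hne23) (q3val_ne3 (Ne.symm hc0ne.2.1)) (q3val_ne3 (Ne.symm hc0ne.2.2))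
    refine le_trans ?_ (le_trans (add_le_add (add_le_add (add_le_add hK1 hK2) hK3) hK4) hsum)
    exact_mod_cast (by omega :
      3 * V.card + 2 ≤ V.card + 1 + V.card + V.card + 1)


/- ### The model built from a 3-colouring -/

def colInterp (V : Finset ℕ) (E : Finset (ℕ × ℕ)) (γ : ℕ → Fin 3) : BagInterp where
  Δ := ℕ
  dne := ⟨0⟩
  indMap := id
  indInj := fun _ _ h => h
  cI := fun A a => ((aboxG V E).count (Assertion.conceptA A a) : ℕ∞)
  rI := fun P a b => ((aboxG V E).count (Assertion.roleA P a b) : ℕ∞)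
    + (if P = 1 ∧ ∃ w ∈ V, a = w + 4 ∧ b = (γ w : ℕ) + 1 then 1 else 0)

section ColInterp

variable (V : Finset ℕ) (E : Finset (ℕ × ℕ)) (γ : ℕ → Fin 3)

lemma colInterp_cI0 (u : ℕ) :
    (colInterp V E γ).cI 0 u =
      (if u = 0 then 1 else 0) + (if u - 4 ∈ V ∧ 4 ≤ u then 1 else 0) := by
  show ((aboxG V E).count (Assertion.conceptA 0 u) : ℕ∞) = _
  rw [countV_abox]
  have c3 : ¬ ((0:ℕ) = 1 ∧ u = 1) := fun hc => by omega
  have c4 : ¬ ((0:ℕ) = 1 ∧ u = 2) := fun hc => by omega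
  have c5 : ¬ ((0:ℕ) = 1 ∧ u = 3) := fun hc => by omega
  rw [if_neg c3, if_neg c4, if_neg c5]
  by_cases h1 : u = 0 <;> by_cases h2 : u - 4 ∈ V ∧ 4 ≤ u <;>
    simp [h1, h2] <;> push_cast <;> ring

lemma colInterp_cI1 (v : ℕ) :
    (colInterp V E γ).cI 1 v =
      if v = 1 then ((V.card : ℕ∞) + 1) else if v = 2 then (V.card : ℕ∞)
        else if v = 3 then (V.card : ℕ∞) else 0 := by
  show ((aboxG V E).count (Assertion.conceptA 1 v) : ℕ∞) = _
  rw [countV_abox]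
  have c1 : ¬ ((1:ℕ) = 0 ∧ v = 0) := fun hc => by omega
  have c2 : ¬ ((1:ℕ) = 0 ∧ v - 4 ∈ V ∧ 4 ≤ v) := fun hc => absurd hc.1 (by omega)
  rw [if_neg c1, if_neg c2]
  by_cases h1 : v = 1
  · subst h1
    have d2 : ¬ ((1:ℕ) = 1 ∧ (1:ℕ) = 2) := fun hc => by omega
    have d3 : ¬ ((1:ℕ) = 1 ∧ (1:ℕ) = 3) := fun hc => by omega
    rw [if_pos ⟨rfl, rfl⟩, if_neg d2, if_neg d3, if_pos rfl]
    push_cast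
    ring
  · by_cases h2 : v = 2
    · subst h2
      have d1 : ¬ ((1:ℕ) = 1 ∧ (2:ℕ) = 1) := fun hc => by omega
      have d3 : ¬ ((1:ℕ) = 1 ∧ (2:ℕ) = 3) := fun hc => by omega
      rw [if_neg d1, if_pos ⟨rfl, rfl⟩, if_neg d3, if_neg h1, if_pos rfl]
      push_cast
      ring
    · by_cases h3 : v = 3
      · subst h3
        have d1 : ¬ ((1:ℕ) = 1 ∧ (3:ℕ) = 1) := fun hc => by omega
        have d2 : ¬ ((1:ℕ) = 1 ∧ (3:ℕ) = 2) := fun hc => by omega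
        rw [if_neg d1, if_neg d2, if_pos ⟨rfl, rfl⟩, if_neg h1, if_neg h2, if_pos rfl]
        push_cast
        ring
      · have d1 : ¬ ((1:ℕ) = 1 ∧ v = 1) := fun hc => h1 hc.2
        have d2 : ¬ ((1:ℕ) = 1 ∧ v = 2) := fun hc => h2 hc.2
        have d3 : ¬ ((1:ℕ) = 1 ∧ v = 3) := fun hc => h3 hc.2
        rw [if_neg d1, if_neg d2, if_neg d3, if_neg h1, if_neg h2, if_neg h3]
        simp

lemma colInterp_rI0 (u v : ℕ) :
    (colInterp V E γ).rI 0 u v =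
      (if (u - 4, v - 4) ∈ E ∧ 4 ≤ u ∧ 4 ≤ v then 1 else 0)
        + (if u = 0 ∧ v = 0 then 1 else 0) := by
  show ((aboxG V E).count (Assertion.roleA 0 u v) : ℕ∞) + _ = _
  rw [countR_abox]
  have c0 : ¬ ((0:ℕ) = 1 ∧ ∃ w ∈ V, u = w + 4 ∧ v = (γ w : ℕ) + 1) := fun hc => by
    exact absurd hc.1 (by omega)
  have c3 : ¬ ((0:ℕ) = 1 ∧ u = 0 ∧ v = 1) := fun hc => by omega
  rw [if_neg c0, if_neg c3]
  have e1 : ((0:ℕ) = 0 ∧ (u - 4, v - 4) ∈ E ∧ 4 ≤ u ∧ 4 ≤ v) ↔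
      ((u - 4, v - 4) ∈ E ∧ 4 ≤ u ∧ 4 ≤ v) := by
    constructor
    · exact fun hc => hc.2
    · exact fun hc => ⟨rfl, hc⟩
  have e2 : ((0:ℕ) = 0 ∧ u = 0 ∧ v = 0) ↔ (u = 0 ∧ v = 0) := by
    constructor
    · exact fun hc => hc.2
    · exact fun hc => ⟨rfl, hc⟩
  rw [if_congr e1 rfl rfl, if_congr e2 rfl rfl]
  by_cases h1 : (u - 4, v - 4) ∈ E ∧ 4 ≤ u ∧ 4 ≤ v <;> by_cases h2 : u = 0 ∧ v = 0 <;>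
    simp [h1, h2]

lemma colInterp_rI1 (u v : ℕ) :
    (colInterp V E γ).rI 1 u v =
      (if u = 0 ∧ v = 1 then 1 else 0)
        + (if ∃ w ∈ V, u = w + 4 ∧ v = (γ w : ℕ) + 1 then 1 else 0) := by
  show ((aboxG V E).count (Assertion.roleA 1 u v) : ℕ∞) + _ = _
  rw [countR_abox]
  have c1 : ¬ ((1:ℕ) = 0 ∧ (u - 4, v - 4) ∈ E ∧ 4 ≤ u ∧ 4 ≤ v) := fun hc => by
    exact absurd hc.1 (by omega)
  have c2 : ¬ ((1:ℕ) = 0 ∧ u = 0 ∧ v = 0) := fun hc => by omega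
  rw [if_neg c1, if_neg c2]
  have e1 : ((1:ℕ) = 1 ∧ u = 0 ∧ v = 1) ↔ (u = 0 ∧ v = 1) := by
    constructor
    · exact fun hc => hc.2
    · exact fun hc => ⟨rfl, hc⟩
  have e2 : ((1:ℕ) = 1 ∧ ∃ w ∈ V, u = w + 4 ∧ v = (γ w : ℕ) + 1) ↔
      (∃ w ∈ V, u = w + 4 ∧ v = (γ w : ℕ) + 1) := by
    constructor
    · exact fun hc => hc.2
    · exact fun hc => ⟨rfl, hc⟩
  rw [if_congr e1 rfl rfl, if_congr e2 rfl rfl]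
  by_cases h1 : u = 0 ∧ v = 1 <;> by_cases h2 : ∃ w ∈ V, u = w + 4 ∧ v = (γ w : ℕ) + 1 <;>
    simp [h1, h2]

end ColInterp


lemma nat_sub_add4 (u : ℕ) (h : 4 ≤ u) : u = u - 4 + 4 := by omega

lemma nat_add4_inj {w w' : ℕ} (h : w + 4 = w' + 4) : w = w' := by omega

lemma colInterp_model (V : Finset ℕ) (E : Finset (ℕ × ℕ)) (γ : ℕ → Fin 3) :
    (colInterp V E γ).IsModel ⟨tbox3, aboxG V E⟩ := by
  constructor
  · intro ax hax
    have hax' : ax = TBoxAxiom.cIncl (DLConcept.atomic 0) (DLConcept.ex (Role.atomic 1)) ∨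
        ax = TBoxAxiom.cIncl (DLConcept.ex (Role.inv 1)) (DLConcept.atomic 1) := by
      simpa [tbox3] using hax
    rcases hax' with h | h <;> subst h
    · -- Vertex ⊑ ∃hasColour
      show ∀ u : ℕ, (colInterp V E γ).cI 0 u ≤ bagSum (fun v : ℕ => (colInterp V E γ).rI 1 u v)
      intro u
      rw [colInterp_cI0]
      by_cases h0 : u = (0 : ℕ)
      · subst h0
        have h1 : (1 : ℕ∞) ≤ (colInterp V E γ).rI 1 (0:ℕ) (1:ℕ) := by
          rw [colInterp_rI1, if_pos (⟨rfl, rfl⟩ : (0:ℕ) = 0 ∧ (1:ℕ) = 1)]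
          exact le_self_add
        refine le_trans ?_ (le_trans h1 (single_le_bagSum _ (1 : ℕ)))
        rw [if_pos rfl, if_neg (fun hc => absurd hc.2 (by decide) :
          ¬ ((0:ℕ) - 4 ∈ V ∧ 4 ≤ (0:ℕ)))]
        simp
      · by_cases h4 : u - 4 ∈ V ∧ 4 ≤ u
        · have h1 : (1 : ℕ∞) ≤ (colInterp V E γ).rI 1 u (((γ (u - 4) : ℕ) + 1 : ℕ)) := by
            rw [colInterp_rI1, if_pos (⟨u - 4, h4.1, nat_sub_add4 u h4.2, rfl⟩ :
              ∃ w ∈ V, u = w + 4 ∧ (γ (u - 4) : ℕ) + 1 = (γ w : ℕ) + 1)]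
            exact le_add_self
          refine le_trans ?_ (le_trans h1 (single_le_bagSum _ _))
          rw [if_neg h0, if_pos h4]
          simp
        · rw [if_neg h0, if_neg h4]
          simp
    · -- ∃hasColour⁻ ⊑ ACol
      show ∀ v : ℕ, bagSum (fun u : ℕ => (colInterp V E γ).rI 1 u v) ≤ (colInterp V E γ).cI 1 v
      intro v
      have hsupp : ∀ u : ℕ, (colInterp V E γ).rI 1 u v ≠ 0 →
          u ∈ insert (0 : ℕ) (V.image (· + 4)) := by
        intro u hu
        by_contra hmem
        simp only [Finset.mem_insert, Finset.mem_image, not_or, not_exists] at hmem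
        apply hu
        rw [colInterp_rI1, if_neg, if_neg]
        · simp
        · rintro ⟨w, hw, he, -⟩
          exact hmem.2 w ⟨hw, he.symm⟩
        · exact fun hc => hmem.1 hc.1
      refine le_trans (bagSum_le_sum _ _ hsupp) ?_
      have h0T : (0 : ℕ) ∉ V.image (· + 4) := by
        simp only [Finset.mem_image, not_exists]
        rintro w ⟨-, hw⟩
        exact add4_ne_zero w hw
      rw [Finset.sum_insert h0T,
        Finset.sum_image (fun w _ w' _ h => nat_add4_inj h)]
      have h0 : (colInterp V E γ).rI 1 (0:ℕ) v = if v = (1:ℕ) then 1 else 0 := by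
        have hno : ¬ ∃ w ∈ V, (0:ℕ) = w + 4 ∧ v = (γ w : ℕ) + 1 := by
          rintro ⟨w, -, he, -⟩
          exact add4_ne_zero w he.symm
        rw [colInterp_rI1, if_neg hno, if_congr
          (⟨fun hc => hc.2, fun hc => ⟨rfl, hc⟩⟩ : ((0:ℕ) = 0 ∧ v = 1) ↔ v = (1:ℕ)) rfl rfl,
          add_zero]
      have hw : ∀ w ∈ V, (colInterp V E γ).rI 1 ((w + 4 : ℕ)) v =
          if v = (γ w : ℕ) + 1 then 1 else 0 := by
        intro w hwV
        have hiff : (∃ w' ∈ V, w + 4 = w' + 4 ∧ v = (γ w' : ℕ) + 1) ↔ v = (γ w : ℕ) + 1 := by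
          constructor
          · rintro ⟨w', hw', he, hv⟩
            rwa [nat_add4_inj he]
          · exact fun hv => ⟨w, hwV, rfl, hv⟩
        rw [colInterp_rI1, if_neg (fun hc => add4_ne_zero w hc.1), if_congr hiff rfl rfl,
          zero_add]
      rw [h0, Finset.sum_congr rfl hw]
      have hsum1 : ∑ w ∈ V, (if v = (γ w : ℕ) + 1 then (1:ℕ∞) else 0) ≤ (V.card : ℕ∞) := by
        have hle : ∀ w ∈ V, (if v = (γ w : ℕ) + 1 then (1:ℕ∞) else 0) ≤
            (fun _ => (1:ℕ∞)) w := fun w _ => by split_ifs <;> simp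
        refine le_trans (Finset.sum_le_sum hle) ?_
        rw [Finset.sum_const, nsmul_eq_mul, mul_one]
      by_cases hv1 : v = (1:ℕ)
      · rw [if_pos hv1, colInterp_cI1, if_pos hv1]
        calc 1 + ∑ w ∈ V, (if v = (γ w : ℕ) + 1 then (1:ℕ∞) else 0)
            ≤ 1 + (V.card : ℕ∞) := add_le_add_right hsum1 1
          _ = (V.card : ℕ∞) + 1 := add_comm _ _
      · rw [if_neg hv1, zero_add, colInterp_cI1, if_neg hv1]
        by_cases hv2 : v = (2:ℕ)
        · rw [if_pos hv2]
          exact hsum1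
        · rw [if_neg hv2]
          by_cases hv3 : v = (3:ℕ)
          · rw [if_pos hv3]
            exact hsum1
          · rw [if_neg hv3]
            have : ∀ w ∈ V, (if v = (γ w : ℕ) + 1 then (1:ℕ∞) else 0) = 0 := by
              intro w _
              rw [if_neg]
              intro he
              have h3 : (γ w : ℕ) + 1 = 1 ∨ (γ w : ℕ) + 1 = 2 ∨ (γ w : ℕ) + 1 = 3 := by
                have := (γ w).is_lt
                omega
              rcases h3 with h | h | h
              · exact hv1 (he.trans h)
              · exact hv2 (he.trans h)
              · exact hv3 (he.trans h)
            rw [Finset.sum_eq_zero this]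
  · intro s
    cases s with
    | conceptA A a => exact le_refl _
    | roleA P a b => exact le_self_add


lemma ite_add_ite_ne {p q : Prop} [Decidable p] [Decidable q]
    (h : (if p then (1:ℕ∞) else 0) + (if q then 1 else 0) ≠ 0) : p ∨ q := by
  by_contra hc
  push_neg at hc
  rw [if_neg hc.1, if_neg hc.2] at h
  simp at h

lemma ite3_ne {p q r : Prop} [Decidable p] [Decidable q] [Decidable r] {a b c : ℕ∞}
    (h : (if p then a else if q then b else if r then c else 0) ≠ 0) : p ∨ q ∨ r := by
  by_contra hc
  push_neg at hc
  rw [if_neg hc.1, if_neg hc.2.1, if_neg hc.2.2] at h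
  simp at h

lemma nat_add_sub4 (w : ℕ) : w + 4 - 4 = w := by omega

lemma colInterp_answer (V : Finset ℕ) (E : Finset (ℕ × ℕ)) (γ : ℕ → Fin 3)
    (hγ : ∀ p ∈ E, γ p.1 ≠ γ p.2) :
    q3.bagAnswer (colInterp V E γ) [] ≤ ((3 * V.card + 1 : ℕ) : ℕ∞) := by
  classical
  rw [bagAnswer_q3]
  refine le_trans (bagSum_le_sum _
    ({q3val (colInterp V E γ) (0:ℕ) (0:ℕ) (1:ℕ) (1:ℕ),
      q3val (colInterp V E γ) (0:ℕ) (0:ℕ) (1:ℕ) (2:ℕ),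
      q3val (colInterp V E γ) (0:ℕ) (0:ℕ) (1:ℕ) (3:ℕ)} :
        Finset (Q3Val (colInterp V E γ))) ?_) ?_
  · -- support
    intro F hF
    rw [q3_prod] at hF
    obtain ⟨h1, h234⟩ := mul_ne_zero_iff.mp hF
    obtain ⟨h2, h34⟩ := mul_ne_zero_iff.mp h234
    obtain ⟨h3, h4'⟩ := mul_ne_zero_iff.mp h34
    obtain ⟨h4, -⟩ := mul_ne_zero_iff.mp h4'
    erw [colInterp_rI0] at h1
    erw [colInterp_rI1] at h2 h3
    erw [colInterp_cI1] at h4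
    obtain ⟨n0, hn0⟩ : ∃ n : ℕ, @Eq ℕ (F.1 0) n := ⟨_, rfl⟩
    obtain ⟨n1, hn1⟩ : ∃ n : ℕ, @Eq ℕ (F.1 1) n := ⟨_, rfl⟩
    obtain ⟨n2, hn2⟩ : ∃ n : ℕ, @Eq ℕ (F.1 2) n := ⟨_, rfl⟩
    obtain ⟨n3, hn3⟩ : ∃ n : ℕ, @Eq ℕ (F.1 3) n := ⟨_, rfl⟩
    rw [hn0, hn1] at h1
    rw [hn0, hn2] at h2
    rw [hn1, hn2] at h3
    rw [hn3] at h4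
    have d1 := ite_add_ite_ne h1
    have d2 := ite_add_ite_ne h2
    have d3 := ite_add_ite_ne h3
    have d4 := ite3_ne h4
    by_cases hA : n0 = 0
    · have hn1z : n1 = 0 := by
        rcases d1 with ⟨-, h4a, -⟩ | ⟨-, hz⟩
        · omega
        · exact hz
      have hn2o : n2 = 1 := by
        rcases d2 with ⟨-, h⟩ | ⟨w, -, hw, -⟩
        · exact h
        · omega
      have hFeq : ∀ w : ℕ, n3 = w →
          F = q3val (colInterp V E γ) (0:ℕ) (0:ℕ) (1:ℕ) w := by
        intro w hw
        apply Subtype.ext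
        funext v
        by_cases hv0 : v = 0
        · subst hv0
          exact hn0.trans hA
        · by_cases hv1 : v = 1
          · subst hv1
            exact hn1.trans hn1z
          · by_cases hv2 : v = 2
            · subst hv2
              exact hn2.trans hn2o
            · by_cases hv3 : v = 3
              · subst hv3
                exact hn3.trans hw
              · have hv : v ∉ q3.vars := by
                  simp [q3, CQ.vars, hv0, hv1, hv2, hv3]
                rw [F.2.1 v hv, (q3val (colInterp V E γ) (0:ℕ) (0:ℕ) (1:ℕ) w).2.1 v hv]
      rcases d4 with h | h | h
      · rw [hFeq _ h]; simp
      · rw [hFeq _ h]; simp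
      · rw [hFeq _ h]; simp
    · exfalso
      rcases d2 with ⟨h0, -⟩ | ⟨w, hwV, hw0, hw2⟩
      · exact hA h0
      rcases d1 with ⟨hmemE, h40, h41⟩ | ⟨h0, -⟩
      swap
      · exact hA h0
      rcases d3 with ⟨h10, -⟩ | ⟨w', hw'V, hw1, hw2'⟩
      · omega
      rw [hw0, hw1, nat_add_sub4, nat_add_sub4] at hmemE
      have hgam : γ w = γ w' := by
        have h' : (γ w : ℕ) = (γ w' : ℕ) := by omega
        exact Fin.val_injective h'
      exact hγ (w, w') hmemE hgam
  · -- value of the sum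
    have hno0 : ¬ ∃ w ∈ V, (0:ℕ) = w + 4 ∧ (1:ℕ) = (γ w : ℕ) + 1 := by
      rintro ⟨w, -, he, -⟩
      exact add4_ne_zero w he.symm
    have e1 : (colInterp V E γ).rI 0 (0:ℕ) (0:ℕ) = 1 := by
      rw [colInterp_rI0, if_neg (fun hc => absurd hc.2.1 (by decide)), if_pos ⟨rfl, rfl⟩,
        zero_add]
    have e2 : (colInterp V E γ).rI 1 (0:ℕ) (1:ℕ) = 1 := by
      rw [colInterp_rI1, if_pos ⟨rfl, rfl⟩, if_neg hno0, add_zero]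
    have e3 : (colInterp V E γ).cI 1 (1:ℕ) = (V.card : ℕ∞) + 1 := by
      rw [colInterp_cI1, if_pos rfl]
    have e4 : (colInterp V E γ).cI 1 (2:ℕ) = (V.card : ℕ∞) := by
      rw [colInterp_cI1, if_neg (by decide), if_pos rfl]
    have e5 : (colInterp V E γ).cI 1 (3:ℕ) = (V.card : ℕ∞) := by
      rw [colInterp_cI1, if_neg (by decide), if_neg (by decide), if_pos rfl]
    have hne12 : q3val (colInterp V E γ) (0:ℕ) (0:ℕ) (1:ℕ) (1:ℕ) ≠
        q3val (colInterp V E γ) (0:ℕ) (0:ℕ) (1:ℕ) (2:ℕ) := q3val_ne3 ((by decide : (1:ℕ) ≠ 2))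
    have hne13 : q3val (colInterp V E γ) (0:ℕ) (0:ℕ) (1:ℕ) (1:ℕ) ≠
        q3val (colInterp V E γ) (0:ℕ) (0:ℕ) (1:ℕ) (3:ℕ) := q3val_ne3 ((by decide : (1:ℕ) ≠ 3))
    have hne23 : q3val (colInterp V E γ) (0:ℕ) (0:ℕ) (1:ℕ) (2:ℕ) ≠
        q3val (colInterp V E γ) (0:ℕ) (0:ℕ) (1:ℕ) (3:ℕ) := q3val_ne3 ((by decide : (2:ℕ) ≠ 3))
    rw [Finset.sum_insert (by simp [hne12, hne13]),
      Finset.sum_insert (by simp [hne23]), Finset.sum_singleton]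
    erw [q3val_prod, q3val_prod, q3val_prod]
    simp only [e1, e2, e3, e4, e5]
    apply le_of_eq
    push_cast
    ring

/-- For every finite undirected connected graph `G = (V,E)`
without self-loops: `G` is not 3-colourable iff the bag certain answer
`q^{⟨T,A_G⟩}(⟨⟩)` is at least `3·|V| + 2`. -/
theorem statement_3 (V : Finset ℕ) (E : Finset (ℕ × ℕ))
    (hVE : ∀ p ∈ E, p.1 ∈ V ∧ p.2 ∈ V)
    (hsym : ∀ p : ℕ × ℕ, p ∈ E ↔ (p.2, p.1) ∈ E)
    (hirr : ∀ v : ℕ, (v, v) ∉ E)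
    (hconn : ∀ u ∈ V, ∀ v ∈ V, Relation.ReflTransGen (fun x y => (x, y) ∈ E) u v) :
    (¬ ∃ γ : ℕ → Fin 3, ∀ p ∈ E, γ p.1 ≠ γ p.2) ↔
      ((3 * V.card + 2 : ℕ) : ℕ∞) ≤ bagCertain ⟨tbox3, aboxG V E⟩ q3 [] := by
  constructor
  · intro h3
    exact le_iInf₂ (fun I hM => lower_bound V E hVE h3 I hM)
  · intro hle hex
    obtain ⟨γ, hγ⟩ := hex
    have hcert : bagCertain ⟨tbox3, aboxG V E⟩ q3 [] ≤ q3.bagAnswer (colInterp V E γ) [] :=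
      iInf₂_le (colInterp V E γ) (colInterp_model V E γ)
    have hcontr := le_trans hle (le_trans hcert (colInterp_answer V E γ hγ))
    have hn : (3 * V.card + 2) ≤ 3 * V.card + 1 := by exact_mod_cast hcontr
    omega
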